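/- For every real ρ with 0 < ρ < 1 and every integer k ∈ ℤ, ∑_{n∈ℤ} ρ^{|n| + |n-k|} = ρ^{|k|} · (|k| + (1 + ρ²)/(1 - ρ²)). -/

import Mathlib

open scoped BigOperators

lemma key_stmt18 (ρ : ℝ) (hρ0 : 0 < ρ) (hρ1 : ρ < 1) (m : ℕ) :
    HasSum (fun n : ℤ => ρ ^ (n.natAbs + (n - (m : ℤ)).natAbs))
      (ρ ^ m * ((m : ℝ) + (1 + ρ ^ 2) / (1 - ρ ^ 2))) := by
  have hρ2 : ρ ^ 2 < 1 := by nlinarith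
  have hne : (1 - ρ ^ 2) ≠ 0 := by nlinarith
  have hgeo : HasSum (fun n : ℕ => (ρ ^ 2) ^ n) (1 - ρ ^ 2)⁻¹ :=
    hasSum_geometric_of_lt_one (sq_nonneg ρ) hρ2
  have htail : HasSum (fun n : ℕ => ρ ^ (m + 2 * n + 2)) (ρ ^ (m + 2) * (1 - ρ ^ 2)⁻¹) := by
    have := hgeo.mul_left (ρ ^ (m + 2))
    have e : (fun n : ℕ => ρ ^ (m + 2 * n + 2)) = fun i => ρ ^ (m + 2) * (ρ ^ 2) ^ i := by
      funext n
      rw [← pow_mul, ← pow_add]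
      ring_nf
    rw [e]; exact this
  -- positive part
  set g : ℕ → ℝ := fun n => ρ ^ (n + ((n : ℤ) - (m : ℤ)).natAbs) with hg
  have hshift : (fun n : ℕ => g (n + (m + 1))) = fun n : ℕ => ρ ^ (m + 2 * n + 2) := by
    funext n
    simp only [hg]
    congr 1
    have : ((n + (m + 1) : ℕ) : ℤ) - (m : ℤ) = (n : ℤ) + 1 := by push_cast; ring
    rw [this]
    omega
  have hgsum : HasSum g (ρ ^ (m + 2) * (1 - ρ ^ 2)⁻¹ + ∑ i ∈ Finset.range (m + 1), g i) := by
    rw [← hasSum_nat_add_iff (m + 1)]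
    rw [hshift]; exact htail
  have hfin : ∑ i ∈ Finset.range (m + 1), g i = (m + 1 : ℝ) * ρ ^ m := by
    have : ∀ i ∈ Finset.range (m + 1), g i = ρ ^ m := by
      intro i hi
      simp only [Finset.mem_range] at hi
      simp only [hg]
      congr 1
      omega
    rw [Finset.sum_congr rfl this, Finset.sum_const, Finset.card_range, nsmul_eq_mul]
    push_cast; ring
  rw [hfin] at hgsum
  -- negative part
  set h : ℕ → ℝ := fun n => ρ ^ (m + 2 * n + 2) with hh
  have hsum := hgsum.int_rec htail
  have heq : (Int.rec g h : ℤ → ℝ) = fun n : ℤ => ρ ^ (n.natAbs + (n - (m : ℤ)).natAbs) := by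
    funext n
    cases n with
    | ofNat n =>
      show g n = _
      simp only [hg, Int.ofNat_eq_coe]
      norm_num
    | negSucc n =>
      show h n = _
      simp only [hh, Int.negSucc_eq]
      congr 1
      omega
  rw [heq] at hsum
  convert hsum using 1
  field_simp
  ring

/-- Appendix E of the paper: for `0 < ρ < 1` and `k ∈ ℤ`,
`∑_{n∈ℤ} ρ^{|n| + |n-k|} = ρ^{|k|} (|k| + (1+ρ²)/(1-ρ²))`. -/
theorem stmt_18 (ρ : ℝ) (hρ0 : 0 < ρ) (hρ1 : ρ < 1) (k : ℤ) :
    Summable (fun n : ℤ => ρ ^ (n.natAbs + (n - k).natAbs)) ∧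
      (∑' n : ℤ, ρ ^ (n.natAbs + (n - k).natAbs)) =
        ρ ^ k.natAbs * ((k.natAbs : ℝ) + (1 + ρ ^ 2) / (1 - ρ ^ 2)) := by
  have key := key_stmt18 ρ hρ0 hρ1 k.natAbs
  have H : HasSum (fun n : ℤ => ρ ^ (n.natAbs + (n - k).natAbs))
      (ρ ^ k.natAbs * ((k.natAbs : ℝ) + (1 + ρ ^ 2) / (1 - ρ ^ 2))) := by
    rcases Int.natAbs_eq k with hk | hk
    · rw [← hk] at key; exact key
    · have hcomp : (fun n : ℤ => ρ ^ (n.natAbs + (n - (k.natAbs : ℤ)).natAbs)) =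
          (fun n : ℤ => ρ ^ (n.natAbs + (n - k).natAbs)) ∘ ⇑(Equiv.neg ℤ) := by
        funext n
        simp only [Function.comp, Equiv.neg_apply]
        congr 1
        omega
      rw [hcomp] at key
      exact (Equiv.neg ℤ).hasSum_iff.mp key
  exact ⟨H.summable, H.tsum_eq⟩
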